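/- Let a, b, c ∈ ℝ and λ > 0 with b < 0, c < 0 and Disc(P) := a²b² + 4b³ − 4a³c − 18abc − 27c² < 0, and let A := {(i,j,k) ∈ ℕ³ : ai + bj + ck + λ ≤ 0}. Then there exist α > 0, ε ∈ (0,1], K < ∞ and a finite set B ⊂ ℕ³ such that the function V_α(i,j,k) := (i + αj)/(j + αk + 1) + 1 satisfies, for every (i,j,k) ∈ ℕ³: Σ_{ℓ∈ℕ} (e^{−s_{ijk}} s_{ijk}^ℓ / ℓ!) · V_α(ℓ, i, j) − V_α(i,j,k) ≤ −ε·V_α(i,j,k) + K·1_{A∪B}(i,j,k). -/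

import Mathlib

open scoped BigOperators
open Classical

/-- The Poisson probability mass function with parameter `s` at `k`. -/
noncomputable def poissonPMF (s : ℝ) (k : ℕ) : ℝ :=
  Real.exp (-s) * s ^ k / (Nat.factorial k)

/-- The (truncated) intensity `s_{ijk} = max(ai + bj + ck + λ, 0)`. -/
noncomputable def s3 (a b c lam : ℝ) (x : ℕ × ℕ × ℕ) : ℝ :=
  max (a * x.1 + b * x.2.1 + c * x.2.2 + lam) 0

/-- The Lyapunov function `V_α(i,j,k) := (i + αj)/(j + αk + 1) + 1`. -/
noncomputable def hawkesV3 (α : ℝ) (x : ℕ × ℕ × ℕ) : ℝ :=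
  ((x.1 : ℝ) + α * x.2.1) / ((x.2.1 : ℝ) + α * x.2.2 + 1) + 1

/-- Under the hypotheses `b < 0`, `c < 0` and `Disc(P) < 0`, there exist `α > 0`,
`ε ∈ (0,1]`, `K < ∞` and a finite set `B ⊆ ℕ³` such that `V_α` satisfies the drift
condition `D(V_α, ε, K, A ∪ B)`, where `A = {(i,j,k) : ai + bj + ck + λ ≤ 0}`. -/
private lemma hasSum_exp_series (s : ℝ) :
    HasSum (fun n : ℕ => s ^ n / n.factorial) (Real.exp s) := by
  have h : Real.exp s = ∑' n : ℕ, s ^ n / n.factorial := by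
    rw [Real.exp_eq_exp_ℝ, NormedSpace.exp_eq_tsum_div]
  rw [h]
  exact (Real.summable_pow_div_factorial s).hasSum

private lemma poisson_hasSum (s : ℝ) : HasSum (fun n => poissonPMF s n) 1 := by
  have h := (hasSum_exp_series s).mul_left (Real.exp (-s))
  have h2 : Real.exp (-s) * Real.exp s = 1 := by
    rw [← Real.exp_add]; simp
  simpa [poissonPMF, mul_div_assoc, h2] using h

private lemma poisson_mean (s : ℝ) :
    HasSum (fun n : ℕ => (n : ℝ) * poissonPMF s n) s := by
  have key : ∀ n : ℕ, ((n : ℝ) + 1) * poissonPMF s (n + 1) = s * poissonPMF s n := by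
    intro n
    have hfac : (((n + 1).factorial : ℕ) : ℝ) = ((n : ℝ) + 1) * (n.factorial : ℝ) := by
      push_cast [Nat.factorial_succ]; ring
    have hfn : ((n.factorial : ℕ) : ℝ) ≠ 0 := Nat.cast_ne_zero.mpr n.factorial_ne_zero
    have hn1 : ((n : ℝ) + 1) ≠ 0 := by positivity
    simp only [poissonPMF, hfac, pow_succ]
    field_simp
  have h1 : HasSum (fun n : ℕ => ((n : ℝ) + 1) * poissonPMF s (n + 1)) (s * 1) := by
    simp only [key]
    exact (poisson_hasSum s).mul_left s
  have h2 : HasSum (fun n : ℕ => ((n + 1 : ℕ) : ℝ) * poissonPMF s (n + 1))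
      (s - ∑ i ∈ Finset.range 1, (i : ℝ) * poissonPMF s i) := by
    simpa using h1
  exact (hasSum_nat_add_iff' 1).mp h2

private lemma poisson_expect (s A D : ℝ) (hD : D ≠ 0) :
    ∑' ℓ : ℕ, poissonPMF s ℓ * (((ℓ : ℝ) + A) / D + 1) = (s + A) / D + 1 := by
  have h : HasSum (fun ℓ : ℕ => (1 / D) * ((ℓ : ℝ) * poissonPMF s ℓ) + (A / D + 1) * poissonPMF s ℓ)
      ((1 / D) * s + (A / D + 1) * 1) :=
    ((poisson_mean s).mul_left _).add ((poisson_hasSum s).mul_left _)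
  have h2 : HasSum (fun ℓ : ℕ => poissonPMF s ℓ * (((ℓ : ℝ) + A) / D + 1)) ((s + A) / D + 1) := by
    convert h using 1
    · funext ℓ; field_simp; ring
    · field_simp; ring
  exact h2.tsum_eq

private lemma exists_alpha (a b c : ℝ) (hc : c < 0) :
    ∃ α : ℝ, 0 < α ∧ α ^ 3 + a * α ^ 2 - b * α + c = 0 := by
  set M : ℝ := 1 + |a| + |b| + |c| with hM
  have hM1 : 1 ≤ M := by
    have := abs_nonneg a; have := abs_nonneg b; have := abs_nonneg c
    rw [hM]; linarith
  have hM0 : 0 ≤ M := by linarith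
  set f : ℝ → ℝ := fun x => x ^ 3 - a * x ^ 2 - b * x - c with hf
  have hcont : ContinuousOn f (Set.Icc (-M) 0) := by
    apply Continuous.continuousOn
    rw [hf]; continuity
  have hneg : f (-M) < 0 := by
    have h1 : -|a| * M ^ 2 ≤ a * M ^ 2 :=
      mul_le_mul_of_nonneg_right (neg_abs_le a) (sq_nonneg M)
    have hMsq : M ≤ M ^ 2 := by nlinarith
    have h2 : b * M ≤ |b| * M := mul_le_mul_of_nonneg_right (le_abs_self b) hM0
    have h3 : -c ≤ |c| := neg_le_abs c
    have h4 : |b| * M ≤ |b| * M ^ 2 :=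
      mul_le_mul_of_nonneg_left hMsq (abs_nonneg b)
    have h5 : |c| ≤ |c| * M ^ 2 := by
      have h5a : |c| * 1 ≤ |c| * M ^ 2 :=
        mul_le_mul_of_nonneg_left (by nlinarith) (abs_nonneg c)
      linarith [h5a]
    have hfM : f (-M) = -(M ^ 3) - a * M ^ 2 + b * M - c := by
      rw [hf]; ring
    rw [hfM]
    have hMcube : (|a| + |b| + |c|) * M ^ 2 = M ^ 3 - M ^ 2 := by
      rw [hM]; ring
    nlinarith [sq_nonneg M, hM1]
  have hpos : 0 < f 0 := by
    rw [hf]; simp; linarith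
  have hmem : (0 : ℝ) ∈ Set.Icc (f (-M)) (f 0) := ⟨hneg.le, hpos.le⟩
  obtain ⟨r, hrmem, hr⟩ := intermediate_value_Icc (by linarith : -M ≤ (0 : ℝ)) hcont hmem
  have hrne : r ≠ 0 := by
    intro h
    rw [h] at hr
    rw [hr] at hpos
    exact lt_irrefl 0 hpos
  have hrneg : r < 0 := lt_of_le_of_ne hrmem.2 hrne
  refine ⟨-r, by linarith, ?_⟩
  have hfr : r ^ 3 - a * r ^ 2 - b * r - c = 0 := hr
  linear_combination (-1 : ℝ) * hfr

private lemma drift_core (X Jk N₂ lam aa α ρ C₂ ε : ℝ)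
    (hε0 : 0 ≤ ε) (hlam : 0 ≤ lam) (hN₂1 : 1 ≤ N₂) (hJk0 : 0 ≤ Jk)
    (hF1 : X * Jk ≤ ρ * N₂ ^ 2)
    (hF2 : Jk + 1 ≤ C₂ * N₂)
    (hF3 : X ≤ (aa + α) * N₂)
    (hF4 : (aa + α + lam * C₂) * N₂ ≤ ((1 - ρ) / 2) * N₂ ^ 2)
    (hεg : ε * (4 * (1 + C₂)) = 1 - ρ) :
    (X + lam + (N₂ + 1)) * (Jk + 1) ≤ (1 - ε) * ((N₂ + (Jk + 1)) * (N₂ + 1)) := by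
  have e1 : lam * (Jk + 1) ≤ lam * (C₂ * N₂) := mul_le_mul_of_nonneg_left hF2 hlam
  have e2 : ε * ((N₂ + 1) * (Jk + 1)) ≤ ε * ((2 * N₂) * (C₂ * N₂)) := by
    apply mul_le_mul_of_nonneg_left _ hε0
    apply mul_le_mul (by linarith) hF2 (by linarith) (by linarith)
  have e3 : ε * (N₂ ^ 2 + N₂) ≤ ε * (2 * N₂ ^ 2) := by
    apply mul_le_mul_of_nonneg_left _ hε0
    have h := mul_le_mul_of_nonneg_left hN₂1 (by linarith : (0 : ℝ) ≤ N₂)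
    have h' : N₂ * N₂ = N₂ ^ 2 := by ring
    rw [h'] at h
    linarith [h]
  have hεg2 : ε * (4 * (1 + C₂)) * N₂ ^ 2 = (1 - ρ) * N₂ ^ 2 := by rw [hεg]
  linarith [hF1, hF3, e1, e2, e3, hF4, hεg2, hN₂1]

set_option maxHeartbeats 1600000 in
theorem hawkes3_drift_condition (a b c lam : ℝ) (hlam : 0 < lam)
    (hb : b < 0) (hc : c < 0)
    (hdisc : a ^ 2 * b ^ 2 + 4 * b ^ 3 - 4 * a ^ 3 * c - 18 * a * b * c - 27 * c ^ 2 < 0) :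
    ∃ α : ℝ, 0 < α ∧ ∃ ε : ℝ, ε ∈ Set.Ioc (0 : ℝ) 1 ∧ ∃ K : ℝ, ∃ B : Finset (ℕ × ℕ × ℕ),
      ∀ x : ℕ × ℕ × ℕ,
        (∑' ℓ : ℕ, poissonPMF (s3 a b c lam x) ℓ * hawkesV3 α (ℓ, x.1, x.2.1))
            - hawkesV3 α x
          ≤ -ε * hawkesV3 α x
            + K * Set.indicator
                ({y : ℕ × ℕ × ℕ | a * y.1 + b * y.2.1 + c * y.2.2 + lam ≤ 0} ∪ ↑B)
                (fun _ => (1 : ℝ)) x := by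
  obtain ⟨α, hα, hroot⟩ := exists_alpha a b c hc
  have hb' : (0 : ℝ) < -b := by linarith
  have hc' : (0 : ℝ) < -c := by linarith
  have hcv : c = -(α * (α ^ 2 + a * α - b)) := by linear_combination hroot
  have hv0 : 0 < α ^ 2 + a * α - b := by
    by_contra h
    push_neg at h
    linarith [mul_nonneg hα.le (neg_nonneg.mpr h), hcv, hc]
  have hkey : (a + α) ^ 2 < 4 * (α ^ 2 + a * α - b) := by
    by_contra h
    push_neg at h
    have hid : a ^ 2 * b ^ 2 + 4 * b ^ 3 - 4 * a ^ 3 * c - 18 * a * b * c - 27 * c ^ 2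
        = ((a + α) ^ 2 - 4 * (α ^ 2 + a * α - b)) * (2 * α ^ 2 + a * α + (α ^ 2 + a * α - b)) ^ 2 := by
      linear_combination (-27 * c - 4 * a ^ 3 - 18 * a * b + 27 * (α ^ 3 + a * α ^ 2 - b * α)) * hroot
    have h2 : 0 ≤ ((a + α) ^ 2 - 4 * (α ^ 2 + a * α - b)) * (2 * α ^ 2 + a * α + (α ^ 2 + a * α - b)) ^ 2 :=
      mul_nonneg (by linarith) (sq_nonneg _)
    linarith [hid, hdisc, h2]
  -- constants
  set ρ : ℝ := (a + α) ^ 2 / (4 * (α ^ 2 + a * α - b)) with hρ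
  have hρ0 : 0 ≤ ρ := by rw [hρ]; positivity
  have hρ1 : ρ < 1 := by
    rw [hρ]
    exact (div_lt_one (by linarith)).mpr hkey
  set C : ℝ := (-b)⁻¹ + α * (-c)⁻¹ with hC
  have hC0 : 0 < C := by
    rw [hC]
    exact add_pos (inv_pos.mpr hb') (mul_pos hα (inv_pos.mpr hc'))
  set C₂ : ℝ := |a| * C + lam * C + 1 with hC₂
  have hC₂1 : 1 ≤ C₂ := by
    rw [hC₂]
    linarith [mul_nonneg (abs_nonneg a) hC0.le, mul_pos hlam hC0]
  have hC₂0 : 0 < C₂ := by linarith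
  set ε : ℝ := (1 - ρ) / (4 * (1 + C₂)) with hε
  have hε0 : 0 < ε := by
    rw [hε]
    exact div_pos (by linarith) (by linarith)
  have hε1 : ε ≤ 1 := by
    rw [hε, div_le_one (by linarith)]
    linarith
  have hεg : ε * (4 * (1 + C₂)) = 1 - ρ := by
    rw [hε]
    exact div_mul_cancel₀ _ (by linarith : (4 * (1 + C₂) : ℝ) ≠ 0)
  set T : ℝ := |a| + α + lam * C₂ with hT
  set N : ℕ := ⌈2 * T / (1 - ρ)⌉₊ with hN
  set J₁ : ℕ := ⌈(|a| * N + lam) * (-b)⁻¹⌉₊ with hJ₁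
  set K₁ : ℕ := ⌈(|a| * N + lam) * (-c)⁻¹⌉₊ with hK₁
  clear_value ρ C C₂ ε T N J₁ K₁
  refine ⟨α, hα, ε, ⟨hε0, hε1⟩, |a| + α + lam + 1,
    Finset.range (N + 1) ×ˢ Finset.range (J₁ + 1) ×ˢ Finset.range (K₁ + 1), ?_⟩
  rintro ⟨i, j, k⟩
  dsimp only
  have hD1 : (0 : ℝ) < (i : ℝ) + α * j + 1 := by positivity
  have hD2 : (0 : ℝ) < (j : ℝ) + α * k + 1 := by positivity
  have hV1 : 1 ≤ hawkesV3 α (i, j, k) := by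
    have h0 : 0 ≤ ((i : ℝ) + α * j) / ((j : ℝ) + α * k + 1) := by positivity
    simp only [hawkesV3]
    linarith
  have htsum : (∑' ℓ : ℕ, poissonPMF (s3 a b c lam (i, j, k)) ℓ * hawkesV3 α (ℓ, i, j))
      = (s3 a b c lam (i, j, k) + α * i) / ((i : ℝ) + α * j + 1) + 1 := by
    simp only [hawkesV3]
    exact poisson_expect _ _ _ hD1.ne'
  rw [htsum]
  by_cases hmem : ((i, j, k) : ℕ × ℕ × ℕ) ∈
      ({y : ℕ × ℕ × ℕ | a * y.1 + b * y.2.1 + c * y.2.2 + lam ≤ 0} ∪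
        ↑(Finset.range (N + 1) ×ˢ Finset.range (J₁ + 1) ×ˢ Finset.range (K₁ + 1)) : Set (ℕ × ℕ × ℕ))
  · rw [Set.indicator_of_mem hmem]
    have hsle : s3 a b c lam (i, j, k) ≤ |a| * i + lam := by
      apply max_le
      · have h1 : b * (j : ℝ) ≤ 0 := mul_nonpos_of_nonpos_of_nonneg hb.le (Nat.cast_nonneg j)
        have h2 : c * (k : ℝ) ≤ 0 := mul_nonpos_of_nonpos_of_nonneg hc.le (Nat.cast_nonneg k)
        have h3 : a * (i : ℝ) ≤ |a| * i := mul_le_mul_of_nonneg_right (le_abs_self a) (Nat.cast_nonneg i)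
        dsimp only [s3]
        linarith
      · positivity
    have hE : (s3 a b c lam (i, j, k) + α * i) / ((i : ℝ) + α * j + 1) ≤ |a| + α + lam := by
      rw [div_le_iff₀ hD1]
      have h1 : 0 ≤ (|a| + α + lam) * (α * (j : ℝ)) := by positivity
      have h2 : 0 ≤ lam * (i : ℝ) := by positivity
      have h3 : 0 ≤ |a| := abs_nonneg a
      linarith [hsle]
    have hmul : (ε - 1) * hawkesV3 α (i, j, k) ≤ (ε - 1) * 1 :=
      mul_le_mul_of_nonpos_left hV1 (by linarith)
    simp only [mul_one] at hmul ⊢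
    linarith [hE, hmul]
  · rw [Set.indicator_of_notMem hmem]
    have hnotA : 0 < a * i + b * j + c * k + lam := by
      by_contra h
      push_neg at h
      exact hmem (Set.mem_union_left _ h)
    have hnotB : (i, j, k) ∉ Finset.range (N + 1) ×ˢ Finset.range (J₁ + 1) ×ˢ Finset.range (K₁ + 1) := by
      intro h
      exact hmem (Set.mem_union_right _ (Finset.mem_coe.mpr h))
    have hseq : s3 a b c lam (i, j, k) = a * i + b * j + c * k + lam := max_eq_left hnotA.le
    have haa : a * (i : ℝ) ≤ |a| * i := mul_le_mul_of_nonneg_right (le_abs_self a) (Nat.cast_nonneg i)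
    have hbj0 : b * (j : ℝ) ≤ 0 := mul_nonpos_of_nonpos_of_nonneg hb.le (Nat.cast_nonneg j)
    have hck0 : c * (k : ℝ) ≤ 0 := mul_nonpos_of_nonpos_of_nonneg hc.le (Nat.cast_nonneg k)
    have hbj : (-b) * j ≤ |a| * i + lam := by linarith
    have hck : (-c) * k ≤ |a| * i + lam := by linarith
    have hJb : (j : ℝ) ≤ (|a| * i + lam) * (-b)⁻¹ := by
      rw [← div_eq_mul_inv, le_div_iff₀ hb']
      linarith
    have hKb : (k : ℝ) ≤ (|a| * i + lam) * (-c)⁻¹ := by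
      rw [← div_eq_mul_inv, le_div_iff₀ hc']
      linarith
    have hiN : (N : ℝ) + 1 ≤ (i : ℝ) := by
      by_contra hlt
      push_neg at hlt
      have hiN' : i ≤ N := by
        have h0 : (i : ℝ) < ((N + 1 : ℕ) : ℝ) := by push_cast; linarith
        exact Nat.lt_succ_iff.mp (by exact_mod_cast h0)
      apply hnotB
      have hcast : (i : ℝ) ≤ (N : ℝ) := by exact_mod_cast hiN'
      have hjJ : j ≤ J₁ := by
        have h1 : (j : ℝ) ≤ (|a| * N + lam) * (-b)⁻¹ := by
          refine hJb.trans ?_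
          apply mul_le_mul_of_nonneg_right _ (by positivity)
          linarith [mul_le_mul_of_nonneg_left hcast (abs_nonneg a)]
        have h2 : (j : ℝ) ≤ (J₁ : ℝ) := h1.trans (by rw [hJ₁]; exact Nat.le_ceil _)
        exact_mod_cast h2
      have hkK : k ≤ K₁ := by
        have h1 : (k : ℝ) ≤ (|a| * N + lam) * (-c)⁻¹ := by
          refine hKb.trans ?_
          apply mul_le_mul_of_nonneg_right _ (by positivity)
          linarith [mul_le_mul_of_nonneg_left hcast (abs_nonneg a)]
        have h2 : (k : ℝ) ≤ (K₁ : ℝ) := h1.trans (by rw [hK₁]; exact Nat.le_ceil _)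
        exact_mod_cast h2
      simp only [Finset.mem_product, Finset.mem_range]
      exact ⟨Nat.lt_succ_of_le hiN', Nat.lt_succ_of_le hjJ, Nat.lt_succ_of_le hkK⟩
    -- abstract variables
    obtain ⟨X, hX⟩ : ∃ X : ℝ, X = a * i + b * j + c * k + α * i := ⟨_, rfl⟩
    obtain ⟨N₂, hN₂⟩ : ∃ N₂ : ℝ, N₂ = (i : ℝ) + α * j := ⟨_, rfl⟩
    obtain ⟨Jk, hJk⟩ : ∃ Jk : ℝ, Jk = (j : ℝ) + α * k := ⟨_, rfl⟩
    have hN₂0 : 0 ≤ N₂ := by rw [hN₂]; positivity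
    have hJk0 : 0 ≤ Jk := by rw [hJk]; positivity
    have hIN₂ : (i : ℝ) ≤ N₂ := by
      rw [hN₂]; linarith [mul_nonneg hα.le (Nat.cast_nonneg j)]
    have hN₂1 : 1 ≤ N₂ := by
      have h0 : (0 : ℝ) ≤ N := Nat.cast_nonneg N
      linarith [hiN, hIN₂]
    have hD2' : (0 : ℝ) < Jk + 1 := by linarith
    have hid2 : 4 * (α ^ 2 + a * α - b) * (X * Jk)
        = (a + α) ^ 2 * N₂ ^ 2 - (2 * X - (a + α) * N₂) ^ 2 := by
      rw [hX, hN₂, hJk]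
      linear_combination ((4 : ℝ) * k * (2 * (a * i + b * j + c * k + α * i)
        - (a + α) * ((i : ℝ) + α * j) + (α ^ 2 + a * α - b) * ((j : ℝ) + α * k)
        - k * (α * (α ^ 2 + a * α - b) + c))) * hcv
    have hF1 : X * Jk ≤ ρ * N₂ ^ 2 := by
      rw [hρ, div_mul_eq_mul_div, le_div_iff₀ (by linarith : (0 : ℝ) < 4 * (α ^ 2 + a * α - b))]
      linarith [hid2, sq_nonneg (2 * X - (a + α) * N₂)]
    have hF2 : Jk + 1 ≤ C₂ * N₂ := by
      have h2 : α * (k : ℝ) ≤ α * ((|a| * i + lam) * (-c)⁻¹) :=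
        mul_le_mul_of_nonneg_left hKb hα.le
      have h1 : Jk ≤ (|a| * i + lam) * C := by
        rw [hJk, hC]
        have hexp : (|a| * i + lam) * ((-b)⁻¹ + α * (-c)⁻¹)
            = (|a| * i + lam) * (-b)⁻¹ + α * ((|a| * i + lam) * (-c)⁻¹) := by ring
        rw [hexp]
        linarith [hJb, h2]
      have h3 : (|a| * C) * (i : ℝ) ≤ (|a| * C) * N₂ :=
        mul_le_mul_of_nonneg_left hIN₂ (mul_nonneg (abs_nonneg a) hC0.le)
      have h4 : (lam * C) * 1 ≤ (lam * C) * N₂ :=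
        mul_le_mul_of_nonneg_left hN₂1 (mul_nonneg hlam.le hC0.le)
      rw [hC₂]
      have h1' : Jk ≤ (|a| * C) * i + lam * C := by
        have : (|a| * i + lam) * C = (|a| * C) * i + lam * C := by ring
        linarith [h1, this.ge]
      linarith [h1', h3, h4, hN₂1]
    have hF3 : X ≤ (|a| + α) * N₂ := by
      rw [hX]
      have h5 : α * (i : ℝ) ≤ α * N₂ := mul_le_mul_of_nonneg_left hIN₂ hα.le
      have h6 : |a| * (i : ℝ) ≤ |a| * N₂ := mul_le_mul_of_nonneg_left hIN₂ (abs_nonneg a)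
      have hexp : (|a| + α) * N₂ = |a| * N₂ + α * N₂ := by ring
      rw [hexp]
      linarith [haa, hbj0, hck0, h5, h6]
    have hF4 : (|a| + α + lam * C₂) * N₂ ≤ ((1 - ρ) / 2) * N₂ ^ 2 := by
      have h1 : 2 * T / (1 - ρ) ≤ (N : ℝ) := by rw [hN]; exact Nat.le_ceil _
      have h2 : 2 * T / (1 - ρ) ≤ N₂ := by linarith [hiN, hIN₂]
      rw [div_le_iff₀ (by linarith : (0 : ℝ) < 1 - ρ)] at h2
      have h3 : 2 * T * N₂ ≤ N₂ * (1 - ρ) * N₂ := mul_le_mul_of_nonneg_right h2 hN₂0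
      have h5 : N₂ * (1 - ρ) * N₂ = (1 - ρ) * N₂ ^ 2 := by ring
      rw [h5] at h3
      have h4 : (|a| + α + lam * C₂) * N₂ = T * N₂ := by rw [hT]
      rw [h4]
      linarith [h3]
    have hgoal2 : (X + lam + (N₂ + 1)) * (Jk + 1) ≤ (1 - ε) * ((N₂ + (Jk + 1)) * (N₂ + 1)) :=
      drift_core X Jk N₂ lam (|a|) α ρ C₂ ε hε0.le hlam.le hN₂1 hJk0 hF1 hF2 hF3 hF4 hεg
    have hgoal : (s3 a b c lam (i, j, k) + α * i) / ((i : ℝ) + α * j + 1) + 1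
        ≤ (1 - ε) * hawkesV3 α (i, j, k) := by
      have hVre : hawkesV3 α (i, j, k) = (N₂ + (Jk + 1)) / (Jk + 1) := by
        simp only [hawkesV3]
        rw [hN₂, hJk, div_add_one (by linarith : ((j : ℝ) + α * k + 1) ≠ 0)]
      have hre : (i : ℝ) + α * j + 1 = N₂ + 1 := by rw [hN₂]
      rw [hVre, hseq, div_add_one hD1.ne', ← mul_div_assoc, hre,
        div_le_div_iff₀ (by rw [← hre]; exact hD1) hD2']
      have hnum : a * i + b * j + c * k + lam + α * i + (N₂ + 1)
          = X + lam + (N₂ + 1) := by rw [hX]; ring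
      rw [hnum]
      linarith [hgoal2]
    simp only [mul_zero, add_zero]
    linarith [hgoal]
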